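/- Let F be a field of characteristic ∉ {2, 3, 5}. In the algebra Q₂(1/3), with 𝟙 := (3/5)(s₁ + s₂ + d₁ + d₂), t₁ := 𝟙 − d₁ and t₂ := 𝟙 − d₂: t₁ is an idempotent, s₁·t₁ = (2/3)s₁ + (1/6)t₁ − (1/6)t₂, t₁·t₂ = (2/3)s₁ + (2/3)s₂ − (1/3)t₁ − (1/3)t₂, and the (nonunital) subalgebra of Q₂(1/3) generated by {s₁, t₁} is all of Q₂(1/3). -/

import Mathlib

/-- The multiplication of the algebra `Q₂(1/3)` in the basis
`s₁ = e 0`, `s₂ = e 1`, `d₁ = e 2`, `d₂ = e 3`. -/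
def mulQ2 {F : Type*} [Field F] (u v : Fin 4 → F) : Fin 4 → F :=
  ![u 0 * v 0 + (1/3) * (u 0*v 2 + u 2*v 0) + (1/3) * (u 0*v 3 + u 3*v 0)
      - (1/3) * (u 2*v 3 + u 3*v 2),
    u 1 * v 1 + (1/3) * (u 1*v 2 + u 2*v 1) + (1/3) * (u 1*v 3 + u 3*v 1)
      - (1/3) * (u 2*v 3 + u 3*v 2),
    u 2 * v 2 + (1/6) * (u 0*v 2 + u 2*v 0) - (1/6) * (u 0*v 3 + u 3*v 0)
      + (1/6) * (u 1*v 2 + u 2*v 1) - (1/6) * (u 1*v 3 + u 3*v 1) + (1/3) * (u 2*v 3 + u 3*v 2),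
    u 3 * v 3 - (1/6) * (u 0*v 2 + u 2*v 0) + (1/6) * (u 0*v 3 + u 3*v 0)
      - (1/6) * (u 1*v 2 + u 2*v 1) + (1/6) * (u 1*v 3 + u 3*v 1) + (1/3) * (u 2*v 3 + u 3*v 2)]

lemma mulQ2_smul_right {F : Type*} [Field F] (b : F) (u v : Fin 4 → F) :
    mulQ2 u (b • v) = b • mulQ2 u v := by
  funext i
  fin_cases i <;>
    · simp [mulQ2, mul_add, mul_sub]
      try ring

lemma mulQ2_smul_left {F : Type*} [Field F] (a : F) (u v : Fin 4 → F) :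
    mulQ2 (a • u) v = a • mulQ2 u v := by
  funext i
  fin_cases i <;>
    · simp [mulQ2, mul_add, mul_sub]
      try ring

lemma mulQ2_w1_w1 {F : Type*} [Field F] (h2 : (2 : F) ≠ 0) (h3 : (3 : F) ≠ 0) :
    mulQ2 (F := F) ![3, 3, -2, 3] ![3, 3, -2, 3] = ![15, 15, -10, 15] := by
  have h6 : (6 : F) ≠ 0 := by
    have h : (6 : F) = 2 * 3 := by norm_num
    rw [h]; exact mul_ne_zero h2 h3
  funext i
  fin_cases i <;>
    · simp only [mulQ2, Matrix.cons_val_zero, Matrix.cons_val_one, Matrix.head_cons,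
        Matrix.cons_val_two, Matrix.tail_cons, Matrix.cons_val_three, Fin.reduceFinMk, Fin.isValue]
      field_simp [h6]
      try ring

lemma mulQ2_s1_w1 {F : Type*} [Field F] (h2 : (2 : F) ≠ 0) (h3 : (3 : F) ≠ 0) :
    mulQ2 (F := F) ![1, 0, 0, 0] ![3, 3, -2, 3] = ![10/3, 0, -(5/6), 5/6] := by
  have h6 : (6 : F) ≠ 0 := by
    have h : (6 : F) = 2 * 3 := by norm_num
    rw [h]; exact mul_ne_zero h2 h3
  funext i
  fin_cases i <;>
    · simp only [mulQ2, Matrix.cons_val_zero, Matrix.cons_val_one, Matrix.head_cons,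
        Matrix.cons_val_two, Matrix.tail_cons, Matrix.cons_val_three, Fin.reduceFinMk, Fin.isValue]
      field_simp [h6]
      try ring

lemma mulQ2_w1_w2 {F : Type*} [Field F] (h2 : (2 : F) ≠ 0) (h3 : (3 : F) ≠ 0) :
    mulQ2 (F := F) ![3, 3, -2, 3] ![3, 3, 3, -2] = ![20/3, 20/3, -(5/3), -(5/3)] := by
  have h6 : (6 : F) ≠ 0 := by
    have h : (6 : F) = 2 * 3 := by norm_num
    rw [h]; exact mul_ne_zero h2 h3
  funext i
  fin_cases i <;>
    · simp only [mulQ2, Matrix.cons_val_zero, Matrix.cons_val_one, Matrix.head_cons,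
        Matrix.cons_val_two, Matrix.tail_cons, Matrix.cons_val_three, Fin.reduceFinMk, Fin.isValue]
      field_simp [h6]
      try ring

/-- **`Q₂(1/3)` is generated by the two axes `s₁` and `t₁`.**
Let `F` be a field of characteristic `∉ {2, 3, 5}`.  In the algebra `Q₂(1/3)` with
`𝟙 := (3/5)(s₁ + s₂ + d₁ + d₂)`, `t₁ := 𝟙 - d₁` and `t₂ := 𝟙 - d₂`: `t₁` is an
idempotent, `s₁·t₁ = (2/3)s₁ + (1/6)t₁ - (1/6)t₂`,
`t₁·t₂ = (2/3)s₁ + (2/3)s₂ - (1/3)t₁ - (1/3)t₂`, and the (nonunital) subalgebra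
generated by `{s₁, t₁}` is all of `Q₂(1/3)`. -/
theorem Q2_generated_by_s1_t1
    {F : Type*} [Field F]
    (h2 : (2 : F) ≠ 0) (h3 : (3 : F) ≠ 0) (h5 : (5 : F) ≠ 0)
    (s₁ s₂ d₁ d₂ one t₁ t₂ : Fin 4 → F)
    (hs₁ : s₁ = ![1, 0, 0, 0]) (hs₂ : s₂ = ![0, 1, 0, 0])
    (hd₁ : d₁ = ![0, 0, 1, 0]) (hd₂ : d₂ = ![0, 0, 0, 1])
    (hone : one = (3 / 5 : F) • (s₁ + s₂ + d₁ + d₂))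
    (ht₁ : t₁ = one - d₁) (ht₂ : t₂ = one - d₂) :
    mulQ2 t₁ t₁ = t₁ ∧
    mulQ2 s₁ t₁ = (2 / 3 : F) • s₁ + (1 / 6 : F) • t₁ - (1 / 6 : F) • t₂ ∧
    mulQ2 t₁ t₂ = (2 / 3 : F) • s₁ + (2 / 3 : F) • s₂ - (1 / 3 : F) • t₁ - (1 / 3 : F) • t₂ ∧
    (∀ S : Submodule F (Fin 4 → F), s₁ ∈ S → t₁ ∈ S →
      (∀ u v : Fin 4 → F, u ∈ S → v ∈ S → mulQ2 u v ∈ S) → S = ⊤) := by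
  have h6 : (6 : F) ≠ 0 := by
    have h : (6 : F) = 2 * 3 := by norm_num
    rw [h]; exact mul_ne_zero h2 h3
  have h15 : (15 : F) ≠ 0 := by
    have h : (15 : F) = 3 * 5 := by norm_num
    rw [h]; exact mul_ne_zero h3 h5
  have h30 : (30 : F) ≠ 0 := by
    have h : (30 : F) = 2 * 15 := by norm_num
    rw [h]; exact mul_ne_zero h2 h15
  have h25 : (25 : F) ≠ 0 := by
    have h : (25 : F) = 5 * 5 := by norm_num
    rw [h]; exact mul_ne_zero h5 h5
  have h75 : (75 : F) ≠ 0 := by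
    have h : (75 : F) = 3 * 25 := by norm_num
    rw [h]; exact mul_ne_zero h3 h25
  have h150 : (150 : F) ≠ 0 := by
    have h : (150 : F) = 2 * 75 := by norm_num
    rw [h]; exact mul_ne_zero h2 h75
  -- explicit forms of t₁ and t₂
  have hT1 : t₁ = (1/5 : F) • ![3, 3, -2, 3] := by
    rw [ht₁, hone, hs₁, hs₂, hd₁, hd₂]
    funext i
    fin_cases i <;>
      · simp only [Pi.smul_apply, Pi.add_apply, Pi.sub_apply, smul_eq_mul,
          Matrix.cons_val_zero, Matrix.cons_val_one, Matrix.head_cons,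
          Matrix.cons_val_two, Matrix.tail_cons, Matrix.cons_val_three, Fin.reduceFinMk, Fin.isValue]
        field_simp
        try ring
  have hT2 : t₂ = (1/5 : F) • ![3, 3, 3, -2] := by
    rw [ht₂, hone, hs₁, hs₂, hd₁, hd₂]
    funext i
    fin_cases i <;>
      · simp only [Pi.smul_apply, Pi.add_apply, Pi.sub_apply, smul_eq_mul,
          Matrix.cons_val_zero, Matrix.cons_val_one, Matrix.head_cons,
          Matrix.cons_val_two, Matrix.tail_cons, Matrix.cons_val_three, Fin.reduceFinMk, Fin.isValue]
        field_simp
        try ring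
  -- the three product identities
  have c1 : mulQ2 t₁ t₁ = t₁ := by
    rw [hT1, mulQ2_smul_left, mulQ2_smul_right, mulQ2_w1_w1 h2 h3]
    funext i
    fin_cases i <;>
      · simp only [Pi.smul_apply, smul_eq_mul, Matrix.cons_val_zero, Matrix.cons_val_one,
          Matrix.head_cons, Matrix.cons_val_two, Matrix.tail_cons, Matrix.cons_val_three, Fin.reduceFinMk, Fin.isValue]
        field_simp
        try ring
  have c2 : mulQ2 s₁ t₁ = (2 / 3 : F) • s₁ + (1 / 6 : F) • t₁ - (1 / 6 : F) • t₂ := by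
    rw [hT1, hT2, hs₁, mulQ2_smul_right, mulQ2_s1_w1 h2 h3]
    funext i
    fin_cases i <;>
      · simp only [Pi.smul_apply, Pi.add_apply, Pi.sub_apply, smul_eq_mul,
          Matrix.cons_val_zero, Matrix.cons_val_one, Matrix.head_cons,
          Matrix.cons_val_two, Matrix.tail_cons, Matrix.cons_val_three, Fin.reduceFinMk, Fin.isValue]
        field_simp
        try ring
  have c3 : mulQ2 t₁ t₂ =
      (2 / 3 : F) • s₁ + (2 / 3 : F) • s₂ - (1 / 3 : F) • t₁ - (1 / 3 : F) • t₂ := by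
    rw [hT1, hT2, hs₁, hs₂, mulQ2_smul_left, mulQ2_smul_right, mulQ2_w1_w2 h2 h3]
    funext i
    fin_cases i <;>
      · simp only [Pi.smul_apply, Pi.add_apply, Pi.sub_apply, smul_eq_mul,
          Matrix.cons_val_zero, Matrix.cons_val_one, Matrix.head_cons,
          Matrix.cons_val_two, Matrix.tail_cons, Matrix.cons_val_three, Fin.reduceFinMk, Fin.isValue]
        field_simp
        try ring
  refine ⟨c1, c2, c3, ?_⟩
  intro S hs1S ht1S hmul
  -- t₂ ∈ S
  have ht2S : t₂ ∈ S := by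
    have key : t₂ = (-6 : F) • mulQ2 s₁ t₁ + (4 : F) • s₁ + t₁ := by
      rw [c2]
      funext i
      simp only [Pi.add_apply, Pi.sub_apply, Pi.smul_apply, smul_eq_mul]
      field_simp
      ring
    rw [key]
    exact S.add_mem (S.add_mem (S.smul_mem _ (hmul _ _ hs1S ht1S)) (S.smul_mem _ hs1S)) ht1S
  -- s₂ ∈ S
  have hs2S : s₂ ∈ S := by
    have key : s₂ = (3/2 : F) • mulQ2 t₁ t₂ - s₁ + (1/2 : F) • t₁ + (1/2 : F) • t₂ := by
      rw [c3]
      funext i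
      simp only [Pi.add_apply, Pi.sub_apply, Pi.smul_apply, smul_eq_mul]
      field_simp
      ring
    rw [key]
    exact S.add_mem (S.add_mem (S.sub_mem (S.smul_mem _ (hmul _ _ ht1S ht2S)) hs1S)
      (S.smul_mem _ ht1S)) (S.smul_mem _ ht2S)
  -- one ∈ S
  have honeS : one ∈ S := by
    have key : one = (-3 : F) • s₁ + (-3 : F) • s₂ + (3 : F) • t₁ + (3 : F) • t₂ := by
      rw [ht₁, ht₂, hone]
      funext i
      simp only [Pi.add_apply, Pi.sub_apply, Pi.smul_apply, smul_eq_mul]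
      field_simp
      ring
    rw [key]
    exact S.add_mem (S.add_mem (S.add_mem (S.smul_mem _ hs1S) (S.smul_mem _ hs2S))
      (S.smul_mem _ ht1S)) (S.smul_mem _ ht2S)
  have hd1S : d₁ ∈ S := by
    have key : d₁ = one - t₁ := by rw [ht₁]; abel
    rw [key]; exact S.sub_mem honeS ht1S
  have hd2S : d₂ ∈ S := by
    have key : d₂ = one - t₂ := by rw [ht₂]; abel
    rw [key]; exact S.sub_mem honeS ht2S
  rw [eq_top_iff]
  intro v _
  have hv : v = v 0 • s₁ + v 1 • s₂ + v 2 • d₁ + v 3 • d₂ := by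
    rw [hs₁, hs₂, hd₁, hd₂]
    funext i
    fin_cases i <;> simp
  rw [hv]
  exact S.add_mem (S.add_mem (S.add_mem (S.smul_mem _ hs1S) (S.smul_mem _ hs2S))
    (S.smul_mem _ hd1S)) (S.smul_mem _ hd2S)
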